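/- (Full PartiMax guarantee) If in each of k iterations the greedy step incurs multiplicative loss at most δ = (r/(r+1))^r relative to the best marginal gain (in expectation), then the final set A^S satisfies E[f(A^S)] ≥ (1 - 1/e - δ)·f(A*) for monotone submodular non-negative f. -/

import Mathlib

private lemma union_card_bound {α : Type*} [DecidableEq α]
    (f : Finset α → ℝ)
    (hsub : ∀ (A B : Finset α) (i : α), A ⊆ B → i ∉ B →
      f (insert i B) - f B ≤ f (insert i A) - f A)
    (A : Finset α) (M : ℝ) (hM : 0 ≤ M)
    (hM' : ∀ i, f (insert i A) - f A ≤ M) :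
    ∀ B : Finset α, f (A ∪ B) ≤ f A + B.card * M := by
  intro B
  induction B using Finset.induction_on with
  | empty => simp
  | @insert i B hiB ih =>
    rw [Finset.union_insert, Finset.card_insert_of_notMem hiB]
    by_cases h : i ∈ A ∪ B
    · rw [Finset.insert_eq_self.mpr h]
      push_cast
      nlinarith
    · have h1 := hsub A (A ∪ B) i Finset.subset_union_left h
      have h2 := hM' i
      push_cast
      nlinarith



/-- Full PartiMax guarantee: if in each of `k` iterations the (random) greedy step incurs
multiplicative loss at most `δ = (r/(r+1))^r` in expectation relative to the best marginal
gain, then the final set satisfies `E[f(A^S)] ≥ (1 - 1/e - δ)·f(A*)` for non-negative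
monotone submodular `f`. -/
theorem partimax_guarantee {α : Type*} [Fintype α] [DecidableEq α] [Nonempty α]
    (f : Finset α → ℝ)
    (hnn : ∀ A : Finset α, 0 ≤ f A)
    (hmono : ∀ A B : Finset α, A ⊆ B → f A ≤ f B)
    (hsub : ∀ (A B : Finset α) (i : α), A ⊆ B → i ∉ B →
      f (insert i B) - f B ≤ f (insert i A) - f A)
    (k : ℕ) (hk : 0 < k) (r : ℕ) (hr : 1 ≤ r)
    (δ : ℝ) (hδ : δ = ((r : ℝ) / (r + 1)) ^ r)
    (Ω : Type*) [Fintype Ω] (q : Ω → ℝ)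
    (hq0 : ∀ ω, 0 ≤ q ω) (hq1 : ∑ ω, q ω = 1)
    (AS : ℕ → Ω → Finset α)
    (h0 : ∀ ω, AS 0 ω = ∅)
    (hstep : ∀ m < k, ∀ ω, ∃ i ∉ AS m ω, AS (m + 1) ω = insert i (AS m ω))
    -- expected gain of each iteration is at least `(1-δ)` times the best marginal gain:
    (hexp : ∀ m < k,
      (1 - δ) * (∑ ω, q ω *
          (Finset.univ.sup' Finset.univ_nonempty fun i => f (insert i (AS m ω)) - f (AS m ω)))
        ≤ ∑ ω, q ω * (f (AS (m + 1) ω) - f (AS m ω)))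
    (Astar : Finset α) (hcard : Astar.card ≤ k)
    (hopt : ∀ B : Finset α, B.card ≤ k → f B ≤ f Astar) :
    (1 - Real.exp (-1) - δ) * f Astar ≤ ∑ ω, q ω * f (AS k ω) := by
  have hrR : (1 : ℝ) ≤ (r : ℝ) := by exact_mod_cast hr
  have hr0 : (0 : ℝ) < r := by linarith
  -- δ bounds
  have hδ0 : 0 ≤ δ := by
    rw [hδ]; positivity
  have hδhalf : δ ≤ 1 / 2 := by
    have hber : (2 : ℝ) ≤ (1 + 1 / r) ^ r := by
      have hnn1 : (0:ℝ) ≤ 1 / r := by positivity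
      have := one_add_mul_le_pow (a := (1 : ℝ) / r) (by linarith : (-2:ℝ) ≤ 1/r) r
      have : 1 + (r : ℝ) * (1 / r) ≤ (1 + 1 / r) ^ r := this
      rw [mul_one_div, div_self (ne_of_gt hr0)] at this
      linarith
    have hprod : δ * (1 + 1 / r) ^ r = 1 := by
      rw [hδ, ← mul_pow]
      have : (r : ℝ) / (r + 1) * (1 + 1 / r) = 1 := by
        field_simp
      rw [this, one_pow]
    nlinarith [pow_pos (by positivity : (0:ℝ) < 1 + 1/r) r]
  set g : ℕ → ℝ := fun m => ∑ ω, q ω * f (AS m ω) with hg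
  set c : ℝ := 1 - (1 - δ) / k with hc
  have hkR : (1 : ℝ) ≤ (k : ℝ) := by exact_mod_cast hk
  have hc0 : 0 ≤ c := by
    rw [hc]
    have : (1 - δ) / k ≤ 1 := by
      rw [div_le_one (by linarith)]
      linarith
    linarith
  -- key step inequality
  have key : ∀ m < k, f Astar - g (m + 1) ≤ c * (f Astar - g m) := by
    intro m hm
    have hMnn : ∀ ω, 0 ≤ Finset.univ.sup' Finset.univ_nonempty
        fun i => f (insert i (AS m ω)) - f (AS m ω) := by
      intro ω
      obtain ⟨i⟩ := ‹Nonempty α›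
      refine le_trans ?_ (Finset.le_sup' _ (Finset.mem_univ i))
      have := hmono (AS m ω) (insert i (AS m ω)) (Finset.subset_insert _ _)
      linarith
    have hper : ∀ ω, f Astar - f (AS m ω) ≤ (k : ℝ) *
        Finset.univ.sup' Finset.univ_nonempty
          (fun i => f (insert i (AS m ω)) - f (AS m ω)) := by
      intro ω
      set M := Finset.univ.sup' Finset.univ_nonempty
        (fun i => f (insert i (AS m ω)) - f (AS m ω)) with hM
      have hub := union_card_bound f hsub (AS m ω) M (hMnn ω)
        (fun i => Finset.le_sup' (fun j => f (insert j (AS m ω)) - f (AS m ω))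
          (Finset.mem_univ i)) Astar
      have h1 : f Astar ≤ f (AS m ω ∪ Astar) :=
        hmono _ _ Finset.subset_union_right
      have h2 : (Astar.card : ℝ) * M ≤ (k : ℝ) * M := by
        apply mul_le_mul_of_nonneg_right _ (hMnn ω)
        exact_mod_cast hcard
      linarith
    -- sum over ω
    have hsum : f Astar - g m ≤ (k : ℝ) * ∑ ω, q ω *
        (Finset.univ.sup' Finset.univ_nonempty
          fun i => f (insert i (AS m ω)) - f (AS m ω)) := by
      have : ∑ ω, q ω * (f Astar - f (AS m ω)) ≤ ∑ ω, q ω * ((k : ℝ) *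
          Finset.univ.sup' Finset.univ_nonempty
            (fun i => f (insert i (AS m ω)) - f (AS m ω))) := by
        apply Finset.sum_le_sum
        intro ω _
        exact mul_le_mul_of_nonneg_left (hper ω) (hq0 ω)
      calc f Astar - g m
          = ∑ ω, q ω * (f Astar - f (AS m ω)) := by
            rw [hg]
            simp only [mul_sub]
            rw [Finset.sum_sub_distrib, ← Finset.sum_mul, hq1, one_mul]
        _ ≤ ∑ ω, q ω * ((k : ℝ) * Finset.univ.sup' Finset.univ_nonempty
            (fun i => f (insert i (AS m ω)) - f (AS m ω))) := this
        _ = (k : ℝ) * ∑ ω, q ω * (Finset.univ.sup' Finset.univ_nonempty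
            fun i => f (insert i (AS m ω)) - f (AS m ω)) := by
            rw [Finset.mul_sum]; congr 1; ext ω; ring
    have hgain : g (m + 1) - g m = ∑ ω, q ω * (f (AS (m + 1) ω) - f (AS m ω)) := by
      rw [hg]
      simp only [mul_sub]
      rw [Finset.sum_sub_distrib]
    have he := hexp m hm
    have h1δ : 0 ≤ 1 - δ := by linarith
    have hmul := mul_le_mul_of_nonneg_left hsum (div_nonneg h1δ (by linarith : (0:ℝ) ≤ k))
    rw [hc]
    have hkne : (k : ℝ) ≠ 0 := by linarith
    have : (1 - δ) / k * ((k:ℝ) * ∑ ω, q ω * (Finset.univ.sup' Finset.univ_nonempty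
        fun i => f (insert i (AS m ω)) - f (AS m ω)))
        = (1 - δ) * ∑ ω, q ω * (Finset.univ.sup' Finset.univ_nonempty
        fun i => f (insert i (AS m ω)) - f (AS m ω)) := by
      field_simp
    rw [this] at hmul
    rw [← hgain] at he
    have final : (1 - δ) / k * (f Astar - g m) ≤ g (m + 1) - g m := le_trans hmul he
    ring_nf
    ring_nf at final
    linarith
  -- induction
  have hD : ∀ m ≤ k, f Astar - g m ≤ c ^ m * f Astar := by
    intro m
    induction m with
    | zero =>
      intro _
      have : g 0 = f ∅ := by
        rw [hg]
        simp only [h0]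
        rw [← Finset.sum_mul, hq1, one_mul]
      rw [this]
      have := hnn (∅ : Finset α)
      simp
      linarith
    | succ m ih =>
      intro hmk
      have hm : m < k := hmk
      have h1 := key m hm
      have h2 := ih (le_of_lt hm)
      calc f Astar - g (m + 1) ≤ c * (f Astar - g m) := h1
        _ ≤ c * (c ^ m * f Astar) := mul_le_mul_of_nonneg_left h2 hc0
        _ = c ^ (m + 1) * f Astar := by ring
  have hDk := hD k le_rfl
  -- bound c^k
  have hck : c ^ k ≤ Real.exp (δ - 1) := by
    have hkne : (k : ℝ) ≠ 0 := by linarith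
    have h1 : c ≤ Real.exp (-((1 - δ) / k)) := by
      have := Real.add_one_le_exp (-((1 - δ) / k))
      rw [hc]; linarith
    calc c ^ k ≤ (Real.exp (-((1 - δ) / k))) ^ k := pow_le_pow_left₀ hc0 h1 k
      _ = Real.exp ((k : ℝ) * -((1 - δ) / k)) := (Real.exp_nat_mul _ k).symm
      _ = Real.exp (δ - 1) := by
        congr 1
        field_simp
        ring
  -- exp(δ-1) ≤ exp(-1) + δ
  have hexpb : Real.exp (δ - 1) ≤ Real.exp (-1) + δ := by
    have h1 : Real.exp δ ≤ 1 / (1 - δ) := by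
      have h2 := Real.add_one_le_exp (-δ)
      have h3 : 1 - δ ≤ Real.exp (-δ) := by linarith
      have h4 : (0:ℝ) < 1 - δ := by linarith
      rw [le_div_iff₀ h4]
      have h5 : Real.exp δ * Real.exp (-δ) = 1 := by
        rw [← Real.exp_add]; simp
      nlinarith [Real.exp_pos δ]
    have he1 : Real.exp (-1) ≤ 1 / 2 := by
      have h2 : (2:ℝ) ≤ Real.exp 1 := by
        have := Real.add_one_le_exp 1
        linarith
      rw [Real.exp_neg]
      have h3 : (Real.exp 1)⁻¹ * Real.exp 1 = 1 :=
        inv_mul_cancel₀ (ne_of_gt (Real.exp_pos 1))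
      nlinarith [inv_pos.mpr (Real.exp_pos 1)]
    have hsplit : Real.exp (δ - 1) = Real.exp (-1) * Real.exp δ := by
      rw [← Real.exp_add]; ring_nf
    have h4 : (0:ℝ) < 1 - δ := by linarith
    rw [hsplit]
    have : Real.exp (-1) * Real.exp δ ≤ Real.exp (-1) * (1 / (1 - δ)) :=
      mul_le_mul_of_nonneg_left h1 (le_of_lt (Real.exp_pos _))
    refine le_trans this ?_
    rw [mul_one_div, div_le_iff₀ h4]
    nlinarith
  -- conclude
  have hfA := hnn Astar
  have hfinal : f Astar - g k ≤ (Real.exp (-1) + δ) * f Astar := by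
    calc f Astar - g k ≤ c ^ k * f Astar := hDk
      _ ≤ Real.exp (δ - 1) * f Astar := mul_le_mul_of_nonneg_right hck hfA
      _ ≤ (Real.exp (-1) + δ) * f Astar := mul_le_mul_of_nonneg_right hexpb hfA
  have : ∑ ω, q ω * f (AS k ω) = g k := rfl
  rw [this]
  nlinarith
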